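/- Let E_0,…,E_d and F_0,…,F_e be two families of symmetric orthogonal idempotents, each summing to the identity, with pairwise products zero within each family. Suppose each F_s is a sum of a subset of the E_r's (the E-family refines the F-family). Then Σ_s F_s∘F_s − Σ_r E_r∘E_r is positive semidefinite. -/

import Mathlib

open Matrix Finset

private lemma psd_hadamard {n : ℕ} {A B : Matrix (Fin n) (Fin n) ℝ}
    (hA : A.PosSemidef) (hB : B.PosSemidef) : (A.hadamard B).PosSemidef := by
  obtain ⟨C, rfl⟩ : ∃ C : Matrix (Fin n) (Fin n) ℝ, A = Cᴴ * C := by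
    open scoped MatrixOrder Matrix.Norms.L2Operator in
    simpa [star_eq_conjTranspose] using CStarAlgebra.nonneg_iff_eq_star_mul_self.mp hA.nonneg
  obtain ⟨D, rfl⟩ : ∃ D : Matrix (Fin n) (Fin n) ℝ, B = Dᴴ * D := by
    open scoped MatrixOrder Matrix.Norms.L2Operator in
    simpa [star_eq_conjTranspose] using CStarAlgebra.nonneg_iff_eq_star_mul_self.mp hB.nonneg
  have key : (Cᴴ * C).hadamard (Dᴴ * D) =
      (Matrix.of (fun (p : Fin n × Fin n) (i : Fin n) => C p.1 i * D p.2 i))ᴴ *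
      (Matrix.of (fun (p : Fin n × Fin n) (i : Fin n) => C p.1 i * D p.2 i)) := by
    ext i j
    simp only [Matrix.hadamard_apply, Matrix.mul_apply, Matrix.conjTranspose_apply,
      Matrix.of_apply, star_trivial]
    rw [Finset.sum_mul_sum, Fintype.sum_prod_type]
    apply Finset.sum_congr rfl
    intro a _
    apply Finset.sum_congr rfl
    intro b _
    ring
  rw [key]
  exact Matrix.posSemidef_conjTranspose_mul_self _

private lemma psd_sum {n : ℕ} {ι : Type*} (s : Finset ι) (M : ι → Matrix (Fin n) (Fin n) ℝ)
    (h : ∀ i ∈ s, (M i).PosSemidef) : (∑ i ∈ s, M i).PosSemidef :=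
  Finset.sum_induction M _ (fun _ _ ha hb => ha.add hb) Matrix.PosSemidef.zero h

private lemma sum_hadamard' {n : ℕ} {ι : Type*} (s : Finset ι)
    (M : ι → Matrix (Fin n) (Fin n) ℝ) (A : Matrix (Fin n) (Fin n) ℝ) :
    (∑ i ∈ s, M i).hadamard A = ∑ i ∈ s, (M i).hadamard A := by
  ext i j
  simp [Matrix.hadamard_apply, Matrix.sum_apply, Finset.sum_mul]

theorem refinement_psd {n d e : ℕ}
    (E : Fin (d + 1) → Matrix (Fin n) (Fin n) ℝ)
    (F : Fin (e + 1) → Matrix (Fin n) (Fin n) ℝ)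
    (hEsym : ∀ r, (E r).IsSymm) (hEidem : ∀ r, E r * E r = E r)
    (hEorth : ∀ r s, r ≠ s → E r * E s = 0) (hEsum : ∑ r, E r = 1)
    (hFsym : ∀ s, (F s).IsSymm) (hFidem : ∀ s, F s * F s = F s)
    (hForth : ∀ s t, s ≠ t → F s * F t = 0) (hFsum : ∑ s, F s = 1)
    (hrefine : ∀ s, ∃ S : Finset (Fin (d + 1)), F s = ∑ r ∈ S, E r) :
    ((∑ s, (F s).hadamard (F s)) - ∑ r, (E r).hadamard (E r)).PosSemidef := by
  classical
  choose S hS using hrefine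
  have hEpsd : ∀ r, (E r).PosSemidef := by
    intro r
    have h1 : (E r)ᴴ * E r = E r := by
      have : (E r)ᴴ = E r := by
        ext i j
        simpa [Matrix.conjTranspose_apply] using congrFun (congrFun (hEsym r) i) j
      rw [this, hEidem]
    exact h1 ▸ Matrix.posSemidef_conjTranspose_mul_self (E r)
  -- multiplicity identity
  have key : ∀ r, (∑ s, if r ∈ S s then E r else 0) = E r := by
    intro r
    have h1 : ∀ s, F s * E r = if r ∈ S s then E r else 0 := by
      intro s
      rw [hS s, Finset.sum_mul]
      by_cases h : r ∈ S s
      · rw [Finset.sum_eq_single_of_mem r h, hEidem, if_pos h]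
        intro b _ hb; exact hEorth b r hb
      · rw [if_neg h]
        apply Finset.sum_eq_zero
        intro a ha
        exact hEorth a r (fun hr => h (hr ▸ ha))
    simp_rw [← h1, ← Finset.sum_mul, hFsum, one_mul]
  -- expand F s ⊙ F s
  have expand : ∀ s, (F s).hadamard (F s) = ∑ a ∈ S s, ∑ b ∈ S s, (E a).hadamard (E b) := by
    intro s
    rw [hS s]
    ext i j
    simp only [Matrix.hadamard_apply, Matrix.sum_apply]
    rw [Finset.sum_mul_sum]
  -- diagonal part equals the full E-sum
  have diag : (∑ s, ∑ a ∈ S s, (E a).hadamard (E a)) = ∑ r, (E r).hadamard (E r) := by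
    have h1 : ∀ s, (∑ a ∈ S s, (E a).hadamard (E a)) =
        ∑ a : Fin (d + 1), (if a ∈ S s then (E a).hadamard (E a) else 0) := by
      intro s
      rw [Finset.sum_ite_mem, Finset.univ_inter]
    simp_rw [h1]
    rw [Finset.sum_comm]
    apply Finset.sum_congr rfl
    intro a _
    have : (∑ s, if a ∈ S s then (E a).hadamard (E a) else 0) =
        (∑ s, if a ∈ S s then E a else 0).hadamard (E a) := by
      rw [sum_hadamard']
      apply Finset.sum_congr rfl
      intro s _
      by_cases h : a ∈ S s <;> simp [h, Matrix.zero_hadamard]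
    rw [this, key]
  -- the decomposition
  have decomp : (∑ s, (F s).hadamard (F s)) = (∑ r, (E r).hadamard (E r)) +
      ∑ s, ∑ a ∈ S s, ∑ b ∈ (S s).erase a, (E a).hadamard (E b) := by
    rw [← diag, ← Finset.sum_add_distrib]
    apply Finset.sum_congr rfl
    intro s _
    rw [expand s, ← Finset.sum_add_distrib]
    apply Finset.sum_congr rfl
    intro a ha
    exact (Finset.add_sum_erase _ _ ha).symm
  rw [decomp, add_sub_cancel_left]
  apply psd_sum
  intro s _
  apply psd_sum
  intro a _
  apply psd_sum
  intro b _
  exact psd_hadamard (hEpsd a) (hEpsd b)
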